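/- Let z ∈ Z be in a finite parameter set with prior Π and likelihoods P_w, w ∈ Z. For any S ⊆ Z with z ∉ S and Π(z) > 0, the expected posterior mass satisfies P_z Π_X(S) ≤ Σ_{w∈S} (Π(w)/Π(z))^{1/2} ρ_{1/2}(P_z ‖ P_w), where Π_X(w) = Π(w)P_w(X)/Σ_{w'} Π(w')P_{w'}(X), P_z Π_X(S) denotes the expectation of Π_X(S) under X ~ P_z, and ρ_{1/2}(P‖Q) = Σ_x √(P(x)Q(x)). -/

import Mathlib

lemma aux9 (a b c d D : ℝ) (ha : 0 < a) (hb : 0 ≤ b) (hc : 0 ≤ c) (hd : 0 ≤ d)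
    (h1 : a * b ≤ D) (h2 : c * d ≤ D) :
    b * (c * d) / D ≤ Real.sqrt (c / a) * Real.sqrt (b * d) := by
  have hD : 0 ≤ D := le_trans (mul_nonneg ha.le hb) h1
  have ht : 0 ≤ b * (c * d) := mul_nonneg hb (mul_nonneg hc hd)
  set t := b * (c * d) with ht_def
  have hRHS : Real.sqrt (c / a) * Real.sqrt (b * d) = Real.sqrt (t / a) := by
    rw [← Real.sqrt_mul (by positivity)]
    congr 1
    field_simp
    ring
  rw [hRHS]
  rcases eq_or_lt_of_le hD with hD0 | hD0
  · rw [← hD0, div_zero]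
    exact Real.sqrt_nonneg _
  · rw [div_le_iff₀ hD0, mul_comm]
    have hat : a * t ≤ D * D := by
      calc a * t = (a * b) * (c * d) := by ring
        _ ≤ D * D := mul_le_mul h1 h2 (mul_nonneg hc hd) hD
    have hsq : Real.sqrt (a * t) ≤ D := by
      calc Real.sqrt (a * t) ≤ Real.sqrt (D * D) := Real.sqrt_le_sqrt hat
        _ = D := by rw [Real.sqrt_mul_self hD]
    calc t = Real.sqrt (a * t) * Real.sqrt (t / a) := by
            rw [← Real.sqrt_mul (by positivity)]
            rw [show a * t * (t / a) = t ^ 2 by field_simp]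
            exact (Real.sqrt_sq ht).symm
      _ ≤ D * Real.sqrt (t / a) := by
            exact mul_le_mul_of_nonneg_right hsq (Real.sqrt_nonneg _)

/-- Posterior contraction bound: for a finite parameter set with prior `Π`,
likelihoods `P_w`, true parameter `z` with `Π(z) > 0`, and any `S` not containing `z`,
the expected posterior mass of `S` under `P_z` is at most
`Σ_{w ∈ S} (Π(w)/Π(z))^{1/2} ρ_{1/2}(P_z ‖ P_w)`. -/
theorem stmt9 (Z 𝔛 : Type) [Fintype Z] [Fintype 𝔛]
    (prior : Z → ℝ) (P : Z → 𝔛 → ℝ)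
    (hprior : ∀ w, 0 ≤ prior w) (hpriorsum : ∑ w, prior w = 1)
    (hP : ∀ w x, 0 ≤ P w x) (hPsum : ∀ w, ∑ x, P w x = 1)
    (z : Z) (S : Finset Z) (hzS : z ∉ S) (hz : 0 < prior z) :
    ∑ x, P z x * ((∑ w ∈ S, prior w * P w x) / (∑ w' : Z, prior w' * P w' x)) ≤
      ∑ w ∈ S, Real.sqrt (prior w / prior z) * ∑ x, Real.sqrt (P z x * P w x) := by
  have key : ∀ x, P z x * ((∑ w ∈ S, prior w * P w x) / (∑ w' : Z, prior w' * P w' x)) =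
      ∑ w ∈ S, P z x * (prior w * P w x) / (∑ w' : Z, prior w' * P w' x) := by
    intro x
    rw [Finset.sum_div, Finset.mul_sum]
    exact Finset.sum_congr rfl fun w _ => (mul_div_assoc _ _ _).symm
  simp_rw [key]
  rw [Finset.sum_comm]
  refine Finset.sum_le_sum fun w hw => ?_
  rw [Finset.mul_sum]
  refine Finset.sum_le_sum fun x _ => ?_
  exact aux9 (prior z) (P z x) (prior w) (P w x) _ hz (hP z x) (hprior w) (hP w x)
    (Finset.single_le_sum (f := fun w' => prior w' * P w' x)
      (fun i _ => mul_nonneg (hprior i) (hP i x)) (Finset.mem_univ z))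
    (Finset.single_le_sum (f := fun w' => prior w' * P w' x)
      (fun i _ => mul_nonneg (hprior i) (hP i x)) (Finset.mem_univ w))
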